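/- For α > 0 and k ≠ 0, ω_α'(k) ≤ (1/2)(√(α·tanh(αk)/k) + α·sech(αk)). -/

import Mathlib

noncomputable def omegaA (α k : ℝ) : ℝ :=
  Real.sign k * Real.sqrt (α * k * Real.tanh (α * k))

lemma tanh_hasDerivAt' (x : ℝ) : HasDerivAt Real.tanh ((Real.cosh x)⁻¹ ^ 2) x := by
  have h := (Real.hasDerivAt_sinh x).div (Real.hasDerivAt_cosh x)
    (ne_of_gt (Real.cosh_pos x))
  have heq : (fun y => Real.sinh y / Real.cosh y) = Real.tanh := by
    funext y; rw [Real.tanh_eq_sinh_div_cosh]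
  rw [show (Real.sinh / Real.cosh) = Real.tanh from heq] at h
  refine h.congr_deriv ?_
  have hc := (Real.cosh_pos x).ne'
  have hid : Real.cosh x ^ 2 - Real.sinh x ^ 2 = 1 := Real.cosh_sq_sub_sinh_sq x
  rw [inv_pow, ← one_div]; congr 1
  nlinarith [hid]

lemma omegaA_deriv_eq (α k : ℝ) (hk : 0 < α * k * Real.tanh (α * k)) :
    deriv (omegaA α) k = Real.sign k *
      ((α * Real.tanh (α * k) + α * k * ((Real.cosh (α * k))⁻¹ ^ 2 * α)) /
        (2 * Real.sqrt (α * k * Real.tanh (α * k)))) := by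
  have h1 : HasDerivAt (fun x => α * x) α k := by
    simpa using (hasDerivAt_id k).const_mul α
  have h3 : HasDerivAt (fun x => Real.tanh (α * x)) ((Real.cosh (α * k))⁻¹ ^ 2 * α) k :=
    (tanh_hasDerivAt' (α * k)).comp k h1
  have h4 : HasDerivAt (fun x => α * x * Real.tanh (α * x))
      (α * Real.tanh (α * k) + α * k * ((Real.cosh (α * k))⁻¹ ^ 2 * α)) k := h1.mul h3
  have h5 := (h4.sqrt (ne_of_gt hk)).const_mul (Real.sign k)
  have hk0 : k ≠ 0 := by rintro rfl; simp at hk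
  have heq : omegaA α =ᶠ[nhds k] fun x => Real.sign k * Real.sqrt (α * x * Real.tanh (α * x)) := by
    rcases hk0.lt_or_gt with h | h
    · filter_upwards [Iio_mem_nhds h] with x hx
      simp only [omegaA, Real.sign_of_neg hx, Real.sign_of_neg h]
    · filter_upwards [Ioi_mem_nhds h] with x hx
      simp only [omegaA, Real.sign_of_pos hx, Real.sign_of_pos h]
  rw [heq.deriv_eq, h5.deriv]

theorem omegaA_deriv_le (α : ℝ) (hα : 0 < α) (k : ℝ) (hk : k ≠ 0) :
    deriv (omegaA α) k ≤
      (1 / 2) * (Real.sqrt (α * Real.tanh (α * k) / k) + α * (Real.cosh (α * k))⁻¹) := by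
  have hc : 0 < Real.cosh (α * k) := Real.cosh_pos _
  have hu0 : 0 < (Real.cosh (α * k))⁻¹ := inv_pos.2 hc
  have hu1 : (Real.cosh (α * k))⁻¹ ≤ 1 := by
    rw [inv_le_one_iff₀]; right; exact Real.one_le_cosh _
  have htanh : Real.tanh (α * k) = Real.sinh (α * k) * (Real.cosh (α * k))⁻¹ := by
    rw [Real.tanh_eq_sinh_div_cosh]; ring
  rcases hk.lt_or_gt with hkneg | hkpos
  · -- k < 0
    have hzneg : α * k < 0 := mul_neg_of_pos_of_neg hα hkneg
    have hsh : Real.sinh (α * k) < 0 := Real.sinh_neg_iff.2 hzneg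
    have hshz : Real.sinh (α * k) ≤ α * k := (Real.sinh_lt_self_iff.2 hzneg).le
    have htneg : Real.tanh (α * k) < 0 := by
      rw [htanh]; exact mul_neg_of_neg_of_pos hsh hu0
    have hfk : 0 < α * k * Real.tanh (α * k) := mul_pos_of_neg_of_neg hzneg htneg
    have hq0 : 0 ≤ α * Real.tanh (α * k) / k :=
      div_nonneg_of_nonpos (by nlinarith) hkneg.le
    rw [omegaA_deriv_eq α k hfk, Real.sign_of_neg hkneg]
    set u := (Real.cosh (α * k))⁻¹ with hudef
    set s := Real.sqrt (α * k * Real.tanh (α * k)) with hsdef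
    set t := Real.sqrt (α * Real.tanh (α * k) / k) with htdef
    have hs0 : 0 < s := Real.sqrt_pos.2 hfk
    have ht0 : 0 ≤ t := Real.sqrt_nonneg _
    have ht2 : t ^ 2 * k = α * Real.tanh (α * k) := by
      rw [htdef, Real.sq_sqrt hq0]; field_simp
    have hst : s = |k| * t := by
      rw [hsdef, htdef, ← Real.sqrt_sq_eq_abs, ← Real.sqrt_mul (sq_nonneg k)]
      congr 1; field_simp
    rw [abs_of_neg hkneg] at hst
    have hkey : α * u ≤ t := by
      have hsq : (α * u) ^ 2 ≤ t ^ 2 := by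
        have e1 : (α * u) ^ 2 * k = α * u * (u * (α * k)) := by ring
        have e2 : t ^ 2 * k = α * u * Real.sinh (α * k) := by
          rw [ht2, htanh]; ring
        have h7 : 0 ≤ α * u * (u * (α * k) - (α * k)) :=
          mul_nonneg (mul_pos hα hu0).le (by nlinarith)
        have h8 : 0 ≤ α * u * ((α * k) - Real.sinh (α * k)) :=
          mul_nonneg (mul_pos hα hu0).le (by linarith)
        nlinarith [e1, e2, h7, h8, hkneg]
      calc α * u = Real.sqrt ((α * u) ^ 2) :=
            (Real.sqrt_sq (mul_pos hα hu0).le).symm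
        _ ≤ Real.sqrt (t ^ 2) := Real.sqrt_le_sqrt hsq
        _ = t := Real.sqrt_sq ht0
    have hrw : -1 * ((α * Real.tanh (α * k) + α * k * (u ^ 2 * α)) / (2 * s)) =
        (-(α * Real.tanh (α * k) + α * k * (u ^ 2 * α))) / (2 * s) := by ring
    rw [hrw, div_le_iff₀ (by positivity)]
    nlinarith [hst, ht2, mul_le_mul_of_nonneg_left hkey
      (mul_nonneg (mul_pos hα hu0).le (neg_nonneg.2 hkneg.le))]
  · -- k > 0
    have hzpos : 0 < α * k := mul_pos hα hkpos
    have hsh : 0 < Real.sinh (α * k) := Real.sinh_pos_iff.2 hzpos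
    have hshz : α * k ≤ Real.sinh (α * k) := (Real.self_lt_sinh_iff.2 hzpos).le
    have htpos : 0 < Real.tanh (α * k) := by rw [htanh]; exact mul_pos hsh hu0
    have hfk : 0 < α * k * Real.tanh (α * k) := mul_pos hzpos htpos
    have hq0 : 0 ≤ α * Real.tanh (α * k) / k := by positivity
    rw [omegaA_deriv_eq α k hfk, Real.sign_of_pos hkpos]
    set u := (Real.cosh (α * k))⁻¹ with hudef
    set s := Real.sqrt (α * k * Real.tanh (α * k)) with hsdef
    set t := Real.sqrt (α * Real.tanh (α * k) / k) with htdef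
    have hs0 : 0 < s := Real.sqrt_pos.2 hfk
    have ht0 : 0 ≤ t := Real.sqrt_nonneg _
    have ht2 : t ^ 2 * k = α * Real.tanh (α * k) := by
      rw [htdef, Real.sq_sqrt hq0]; field_simp
    have hst : s = |k| * t := by
      rw [hsdef, htdef, ← Real.sqrt_sq_eq_abs, ← Real.sqrt_mul (sq_nonneg k)]
      congr 1; field_simp
    rw [abs_of_pos hkpos] at hst
    have hkey : α * u ≤ t := by
      have hsq : (α * u) ^ 2 ≤ t ^ 2 := by
        have e1 : (α * u) ^ 2 * k = α * u * (u * (α * k)) := by ring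
        have e2 : t ^ 2 * k = α * u * Real.sinh (α * k) := by
          rw [ht2, htanh]; ring
        have h7 : 0 ≤ α * u * ((α * k) - u * (α * k)) :=
          mul_nonneg (mul_pos hα hu0).le (by nlinarith)
        have h8 : 0 ≤ α * u * (Real.sinh (α * k) - (α * k)) :=
          mul_nonneg (mul_pos hα hu0).le (by linarith)
        nlinarith [e1, e2, h7, h8, hkpos]
      calc α * u = Real.sqrt ((α * u) ^ 2) :=
            (Real.sqrt_sq (mul_pos hα hu0).le).symm
        _ ≤ Real.sqrt (t ^ 2) := Real.sqrt_le_sqrt hsq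
        _ = t := Real.sqrt_sq ht0
    rw [one_mul, div_le_iff₀ (by positivity)]
    nlinarith [hst, ht2, mul_le_mul_of_nonneg_left hkey
      (mul_nonneg (mul_pos hα hu0).le hkpos.le)]
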